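/- arXiv:2205.07120 — 6 statements merged into one kernel-verified Lean document; each statement's English description precedes it below -/
import Mathlib

section
/- For every positive integer n and every integer k with |k| ≤ n, the central-type binomial coefficient satisfies C(2n, n+k) ≤ (2^{2n} / sqrt(π n)) · exp(-k^2/n + 23/(36n)). -/
open Real

lemma stirling_anti {a b : ℕ} (ha : 0 < a) (hab : a ≤ b) :
    Stirling.stirlingSeq b ≤ Stirling.stirlingSeq a := by
  obtain ⟨a', rfl⟩ : ∃ a', a = a' + 1 := ⟨a - 1, by omega⟩
  obtain ⟨b', rfl⟩ : ∃ b', b = b' + 1 := ⟨b - 1, by omega⟩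
  exact Stirling.stirlingSeq'_antitone (by omega)

lemma sqrt_pi_le_stirling (n : ℕ) (hn : 0 < n) : Real.sqrt π ≤ Stirling.stirlingSeq n := by
  obtain ⟨m, rfl⟩ : ∃ m, n = m + 1 := ⟨n - 1, by omega⟩
  have htend : Filter.Tendsto (Stirling.stirlingSeq ∘ Nat.succ) Filter.atTop (nhds (Real.sqrt π)) :=
    Stirling.tendsto_stirlingSeq_sqrt_pi.comp (Filter.tendsto_add_atTop_nat 1)
  exact Stirling.stirlingSeq'_antitone.le_of_tendsto htend m

lemma central_le (n : ℕ) (hn : 0 < n) :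
    (((2 * n).choose n : ℕ) : ℝ) ≤ 2 ^ (2 * n) / Real.sqrt (π * n) := by
  have hn' : (0:ℝ) < n := by exact_mod_cast hn
  set P : ℝ := ((n : ℝ) / Real.exp 1) ^ n with hP
  have hPpos : 0 < P := by positivity
  have hsq : (0:ℝ) < Real.sqrt (2 * n) := by positivity
  have hsqn : (0:ℝ) < Real.sqrt n := by positivity
  have hsn : Real.sqrt π ≤ Stirling.stirlingSeq n := sqrt_pi_le_stirling n hn
  have hs2n : Stirling.stirlingSeq (2 * n) ≤ Stirling.stirlingSeq n := stirling_anti hn (by omega)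
  have hpi : (0:ℝ) < Real.sqrt π := Real.sqrt_pos.mpr pi_pos
  have hspos : (0:ℝ) < Stirling.stirlingSeq n := lt_of_lt_of_le hpi hsn
  set s : ℝ := Stirling.stirlingSeq n with hs
  set a : ℝ := Real.sqrt (2 * n) * P with ha
  have hapos : 0 < a := by positivity
  have hfact : (Nat.factorial n : ℝ) = s * a := by
    rw [hs, ha, Stirling.stirlingSeq, div_mul_cancel₀]
    positivity
  have hfact2 : (Nat.factorial (2*n) : ℝ) = Stirling.stirlingSeq (2*n) * (Real.sqrt (2*(2*n : ℕ)) * (((2*n : ℕ) : ℝ)/Real.exp 1) ^ (2*n)) := by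
    rw [Stirling.stirlingSeq, div_mul_cancel₀]
    positivity
  have hB : Real.sqrt (2*(2*n : ℕ)) * (((2*n : ℕ) : ℝ)/Real.exp 1) ^ (2*n)
      = 2 ^ (2*n+1) * Real.sqrt n * P ^ 2 := by
    push_cast
    have h1 : Real.sqrt (2 * (2 * (n:ℝ))) = 2 * Real.sqrt n := by
      rw [show 2 * (2 * (n:ℝ)) = 2^2 * n by ring, Real.sqrt_mul (by positivity),
        Real.sqrt_sq (by norm_num)]
    have h2 : ((2 * (n:ℝ)) / Real.exp 1) ^ (2*n) = 2 ^ (2*n) * P ^ 2 := by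
      rw [hP, ← pow_mul, show n * 2 = 2 * n from mul_comm n 2,
        show (2 * (n:ℝ)) / Real.exp 1 = 2 * ((n:ℝ)/Real.exp 1) by ring, mul_pow]
    rw [h1, h2]; ring
  have hchoose : (((2*n).choose n : ℕ) : ℝ) * ((Nat.factorial n : ℝ) * (Nat.factorial n : ℝ)) = (Nat.factorial (2*n) : ℝ) := by
    have h := Nat.choose_mul_factorial_mul_factorial (show n ≤ 2*n by omega)
    have h2 : 2*n - n = n := by omega
    rw [h2, mul_assoc] at h
    exact_mod_cast congrArg (Nat.cast : ℕ → ℝ) h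
  set C : ℝ := (((2*n).choose n : ℕ) : ℝ) with hC
  have hCpos : 0 < C := by
    rw [hC]; exact_mod_cast Nat.choose_pos (show n ≤ 2*n by omega)
  have h2nle : (Nat.factorial (2*n) : ℝ) ≤ s * (2 ^ (2*n+1) * Real.sqrt n * P ^ 2) := by
    rw [hfact2, hB]
    exact mul_le_mul_of_nonneg_right hs2n (by positivity)
  -- C * s^2 * a^2 ≤ s * B, divide by s
  have key1 : C * (s * a * (s * a)) ≤ s * (2 ^ (2*n+1) * Real.sqrt n * P ^ 2) := by
    rw [← hfact, hchoose]; exact h2nle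
  have key2 : C * s * a ^ 2 ≤ 2 ^ (2*n+1) * Real.sqrt n * P ^ 2 := by
    have := (mul_le_mul_iff_right₀ hspos).mpr key1
    nlinarith [sq_nonneg a, sq_nonneg s]
  have ha2 : a ^ 2 = 2 * n * P ^ 2 := by
    rw [ha, mul_pow, Real.sq_sqrt (by positivity)]
  have key3 : C * Real.sqrt π * (2 * n * P ^ 2) ≤ 2 ^ (2*n+1) * Real.sqrt n * P ^ 2 := by
    calc C * Real.sqrt π * (2 * n * P ^ 2) ≤ C * s * (2 * n * P ^ 2) :=
          mul_le_mul_of_nonneg_right (mul_le_mul_of_nonneg_left hsn hCpos.le) (by positivity)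
      _ ≤ _ := by rw [← ha2]; exact key2
  rw [Real.sqrt_mul pi_pos.le, le_div_iff₀ (by positivity)]
  have hnn : Real.sqrt n * Real.sqrt n = n := Real.mul_self_sqrt hn'.le
  have h4 : C * (Real.sqrt π * Real.sqrt n) * (2 * Real.sqrt n * P^2)
      ≤ 2^(2*n) * (2 * Real.sqrt n * P^2) := by
    calc C * (Real.sqrt π * Real.sqrt n) * (2 * Real.sqrt n * P^2)
        = C * Real.sqrt π * (2 * (Real.sqrt n * Real.sqrt n) * P^2) := by ring
      _ = C * Real.sqrt π * (2 * n * P^2) := by rw [hnn]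
      _ ≤ 2^(2*n+1) * Real.sqrt n * P^2 := key3
      _ = 2^(2*n) * (2 * Real.sqrt n * P^2) := by ring
  exact le_of_mul_le_mul_right h4 (by positivity)


lemma log_ratio_lb {t : ℝ} (h0 : 0 ≤ t) (h1 : t < 1) :
    2 * t + 2 * t ^ 3 / 3 ≤ Real.log (1 + t) - Real.log (1 - t) := by
  set f : ℝ → ℝ := fun x => Real.log (1 + x) - Real.log (1 - x) - 2 * x - 2 * x ^ 3 / 3 with hf
  have hderiv : ∀ x ∈ Set.Ioo (0:ℝ) 1, HasDerivAt f
      (1/(1+x) + 1/(1-x) - 2 - 2 * x ^ 2) x := by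
    intro x hx
    obtain ⟨hx0, hx1⟩ := hx
    have h1x : (1:ℝ) + x ≠ 0 := by linarith
    have h2x : (1:ℝ) - x ≠ 0 := by linarith
    have d1 : HasDerivAt (fun x : ℝ => Real.log (1 + x)) (1/(1+x)) x := by
      have := (Real.hasDerivAt_log h1x).comp x ((hasDerivAt_id x).const_add 1)
      simpa [one_div, Function.comp_def] using this
    have d2 : HasDerivAt (fun x : ℝ => Real.log (1 - x)) (-(1/(1-x))) x := by
      have := (Real.hasDerivAt_log h2x).comp x ((hasDerivAt_id x).neg.const_add 1)
      simpa [one_div, sub_eq_add_neg, Function.comp_def] using this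
    have d3 : HasDerivAt (fun x : ℝ => 2 * x) 2 x := by
      simpa using (hasDerivAt_id x).const_mul 2
    have d4 : HasDerivAt (fun x : ℝ => 2 * x ^ 3 / 3) (2 * x ^ 2) x := by
      have := ((hasDerivAt_pow 3 x).const_mul 2).div_const 3
      simpa using this.congr_deriv (by ring)
    have := ((d1.sub d2).sub d3).sub d4
    exact this.congr_deriv (by ring)
  have hcont : ContinuousOn f (Set.Ico (0:ℝ) 1) := by
    apply ContinuousOn.sub
    apply ContinuousOn.sub
    apply ContinuousOn.sub
    · exact ContinuousOn.log (by fun_prop) (fun x hx => by simp at hx; nlinarith [hx.1])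
    · exact ContinuousOn.log (by fun_prop) (fun x hx => by simp at hx; nlinarith [hx.2])
    · fun_prop
    · fun_prop
  have hmono : MonotoneOn f (Set.Ico (0:ℝ) 1) := by
    apply monotoneOn_of_deriv_nonneg (convex_Ico 0 1) hcont
    · intro x hx
      rw [interior_Ico] at hx
      exact ((hderiv x hx).differentiableAt).differentiableWithinAt
    · intro x hx
      rw [interior_Ico] at hx
      rw [(hderiv x hx).deriv]
      obtain ⟨hx0, hx1⟩ := hx
      have h1x : (0:ℝ) < 1 + x := by linarith
      have h2x : (0:ℝ) < 1 - x := by linarith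
      have key : 1/(1+x) + 1/(1-x) - 2 - 2 * x ^ 2 = 2 * x ^ 4 / ((1+x) * (1-x)) := by
        field_simp
        ring
      rw [key]
      exact div_nonneg (by positivity) (by nlinarith)
  have := hmono (Set.mem_Ico.mpr ⟨le_refl 0, by norm_num⟩) (Set.mem_Ico.mpr ⟨h0, h1⟩) h0
  simp only [hf] at this
  simp at this
  linarith


lemma poly_ineq (n k : ℕ) (hn : 0 < n) (hk : k ≤ n) :
    (36:ℝ) * (k:ℝ)^2 * (2*(n:ℝ)+1)^2 + 24*(n:ℝ)*(k:ℝ)^2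
      ≤ 48*(n:ℝ)*(k:ℝ)^4 + 23*(2*(n:ℝ)+1)^3 := by
  rcases Nat.lt_or_ge n 2 with h2 | h2
  · interval_cases n
    · interval_cases k <;> norm_num
  · set a : ℝ := (n:ℝ) with haa
    set b : ℝ := (k:ℝ) with hbb
    have ha : (2:ℝ) ≤ a := by rw [haa]; exact_mod_cast h2
    have hb0 : (0:ℝ) ≤ b := by positivity
    have hg : (0:ℝ) ≤ 14592*a^4 + 4608*a^3 - 12096*a^2 - 7680*a - 1296 := by
      nlinarith [sq_nonneg (a-2), sq_nonneg a, mul_nonneg (sub_nonneg.2 ha) (sq_nonneg (a-2)),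
        mul_nonneg (sub_nonneg.2 ha) (sub_nonneg.2 ha)]
    nlinarith [sq_nonneg (96*a*b^2 - (144*a^2 + 168*a + 36)), hg, ha, sq_nonneg b]

lemma choose_ratio (n : ℕ) (hn : 0 < n) : ∀ k : ℕ, k ≤ n →
    (((2*n).choose (n+k) : ℕ) : ℝ) ≤ (((2*n).choose n : ℕ) : ℝ) *
      Real.exp (-(2*(k:ℝ)^2/(2*(n:ℝ)+1) + 2*((k:ℝ)^2*(2*(k:ℝ)^2-1))/(3*(2*(n:ℝ)+1)^3))) := by
  intro k
  induction k with
  | zero => intro _; simp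
  | succ k ih =>
    intro hk
    have hk' : k ≤ n := by omega
    have hkn : k < n := by omega
    have ihh := ih hk'
    have hn' : (0:ℝ) < n := by exact_mod_cast hn
    have hk3 : (k:ℝ) < (n:ℝ) := by exact_mod_cast hkn
    have hD : (0:ℝ) < (n:ℝ) + k + 1 := by positivity
    have hrec : (((2*n).choose (n+(k+1)) : ℕ) : ℝ) * ((n:ℝ)+(k:ℝ)+1)
        = (((2*n).choose (n+k) : ℕ) : ℝ) * ((n:ℝ) - (k:ℝ)) := by
      have h := Nat.choose_succ_right_eq (2*n) (n+k)
      have h2 : 2*n - (n+k) = n - k := by omega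
      rw [h2] at h
      have h3 : n + (k+1) = n + k + 1 := by omega
      rw [h3]
      have := congrArg (Nat.cast : ℕ → ℝ) h
      push_cast [Nat.cast_sub hk'] at this
      convert this using 2
    set t : ℝ := (2*(k:ℝ)+1)/(2*(n:ℝ)+1) with ht
    have hden : (0:ℝ) < 2*(n:ℝ)+1 := by positivity
    have ht0 : 0 ≤ t := by positivity
    have ht1 : t < 1 := by rw [ht, div_lt_one hden]; linarith
    have h1t : 0 < 1 - t := by linarith
    have h1t' : 0 < 1 + t := by linarith
    have hfac : ((n:ℝ) - k)/((n:ℝ)+k+1) ≤ Real.exp (-(2*t + 2*t^3/3)) := by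
      have hlog := log_ratio_lb ht0 ht1
      have hexp : Real.exp (2*t + 2*t^3/3) ≤ (1+t)/(1-t) := by
        rw [(Real.log_div (by linarith) (by linarith)).symm] at hlog
        calc Real.exp (2*t + 2*t^3/3) ≤ Real.exp (Real.log ((1+t)/(1-t))) :=
              Real.exp_le_exp.mpr hlog
          _ = (1+t)/(1-t) := Real.exp_log (by positivity)
      have hratio : ((n:ℝ) - k)/((n:ℝ)+k+1) = (1-t)/(1+t) := by
        rw [ht, div_eq_div_iff (by positivity) (by positivity)]
        field_simp
        ring
      calc ((n:ℝ) - k)/((n:ℝ)+k+1) = (1-t)/(1+t) := hratio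
        _ = ((1+t)/(1-t))⁻¹ := by rw [inv_div]
        _ ≤ (Real.exp (2*t + 2*t^3/3))⁻¹ := inv_anti₀ (Real.exp_pos _) hexp
        _ = Real.exp (-(2*t + 2*t^3/3)) := (Real.exp_neg _).symm
    have hstep : (((2*n).choose (n+(k+1)) : ℕ) : ℝ)
        = (((2*n).choose (n+k) : ℕ) : ℝ) * (((n:ℝ) - k)/((n:ℝ)+k+1)) := by
      rw [← mul_div_assoc, eq_div_iff hD.ne']
      exact hrec
    have hnonneg : (0:ℝ) ≤ ((n:ℝ) - k)/((n:ℝ)+k+1) := div_nonneg (by linarith) hD.le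
    calc (((2*n).choose (n+(k+1)) : ℕ) : ℝ)
        = (((2*n).choose (n+k) : ℕ) : ℝ) * (((n:ℝ) - k)/((n:ℝ)+k+1)) := hstep
      _ ≤ ((((2*n).choose n : ℕ) : ℝ) *
            Real.exp (-(2*(k:ℝ)^2/(2*(n:ℝ)+1) + 2*((k:ℝ)^2*(2*(k:ℝ)^2-1))/(3*(2*(n:ℝ)+1)^3))))
            * (((n:ℝ) - k)/((n:ℝ)+k+1)) := mul_le_mul_of_nonneg_right ihh hnonneg
      _ ≤ ((((2*n).choose n : ℕ) : ℝ) *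
            Real.exp (-(2*(k:ℝ)^2/(2*(n:ℝ)+1) + 2*((k:ℝ)^2*(2*(k:ℝ)^2-1))/(3*(2*(n:ℝ)+1)^3))))
            * Real.exp (-(2*t + 2*t^3/3)) := mul_le_mul_of_nonneg_left hfac (by positivity)
      _ = (((2*n).choose n : ℕ) : ℝ) *
            Real.exp (-(2*((k:ℕ)+1:ℝ)^2/(2*(n:ℝ)+1)
              + 2*(((k:ℕ)+1:ℝ)^2*(2*((k:ℕ)+1:ℝ)^2-1))/(3*(2*(n:ℝ)+1)^3))) := by
          rw [mul_assoc, ← Real.exp_add]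
          congr 2
          rw [ht]
          field_simp
          ring
      _ = _ := by push_cast; ring_nf

lemma main_nat (n k : ℕ) (hn : 0 < n) (hk : k ≤ n) :
    (((2*n).choose (n+k) : ℕ) : ℝ) ≤
      2 ^ (2 * n) / Real.sqrt (π * n) * Real.exp (-((k:ℝ) ^ 2) / n + 23 / (36 * n)) := by
  have hn' : (0:ℝ) < n := by exact_mod_cast hn
  have hden : (0:ℝ) < 2*(n:ℝ)+1 := by positivity
  set E : ℝ := 2*(k:ℝ)^2/(2*(n:ℝ)+1) + 2*((k:ℝ)^2*(2*(k:ℝ)^2-1))/(3*(2*(n:ℝ)+1)^3) with hE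
  have hexpo : -E ≤ -((k:ℝ) ^ 2) / n + 23 / (36 * n) := by
    have hpoly := poly_ineq n k hn hk
    rw [neg_le, hE]
    have hidem : -(-((k:ℝ) ^ 2) / n + 23 / (36 * n)) =
        ((k:ℝ)^2)/n - 23/(36*n) := by ring
    rw [hidem]
    have hdiff : E - ((k:ℝ)^2/n - 23/(36*n)) =
        (48*(n:ℝ)*(k:ℝ)^4 + 23*(2*(n:ℝ)+1)^3 - 36*(k:ℝ)^2*(2*(n:ℝ)+1)^2 - 24*(n:ℝ)*(k:ℝ)^2)
          /(36*(n:ℝ)*(2*(n:ℝ)+1)^3) := by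
      rw [hE]; field_simp; ring
    have h0 : (0:ℝ) ≤ E - ((k:ℝ)^2/n - 23/(36*n)) := by
      rw [hdiff]
      exact div_nonneg (by linarith) (by positivity)
    linarith
  have h1 := choose_ratio n hn k hk
  have h2 := central_le n hn
  have hsqrt : (0:ℝ) < Real.sqrt (π * n) := Real.sqrt_pos.mpr (by positivity)
  calc (((2*n).choose (n+k) : ℕ) : ℝ)
      ≤ (((2*n).choose n : ℕ) : ℝ) * Real.exp (-E) := h1
    _ ≤ (2 ^ (2 * n) / Real.sqrt (π * n)) * Real.exp (-E) :=
        mul_le_mul_of_nonneg_right h2 (Real.exp_pos _).le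
    _ ≤ 2 ^ (2 * n) / Real.sqrt (π * n) * Real.exp (-((k:ℝ) ^ 2) / n + 23 / (36 * n)) :=
        mul_le_mul_of_nonneg_left (Real.exp_le_exp.mpr hexpo) (by positivity)

theorem central_binom_bound (n : ℕ) (hn : 0 < n) (k : ℤ) (hk : |k| ≤ (n : ℤ)) :
    (((2 * n).choose ((n : ℤ) + k).toNat : ℕ) : ℝ) ≤
      2 ^ (2 * n) / Real.sqrt (π * n) *
        Real.exp (-((k : ℝ) ^ 2) / n + 23 / (36 * n)) := by
  rcases le_or_gt 0 k with hk0 | hk0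
  · set j : ℕ := k.toNat with hj
    have hjk : (k : ℝ) = (j : ℝ) := by
      have h : (k : ℤ) = ((j : ℕ) : ℤ) := by rw [hj]; omega
      exact_mod_cast congrArg (Int.cast : ℤ → ℝ) h
    have hjn : j ≤ n := by
      rw [abs_of_nonneg hk0] at hk; omega
    have ht : ((n : ℤ) + k).toNat = n + j := by omega
    rw [ht, hjk]
    exact main_nat n j hn hjn
  · set j : ℕ := (-k).toNat with hj
    have hjk : (k : ℝ) = -(j : ℝ) := by
      have h : (k : ℤ) = -((j : ℕ) : ℤ) := by rw [hj]; omega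
      exact_mod_cast congrArg (Int.cast : ℤ → ℝ) h
    have hjn : j ≤ n := by
      rw [abs_of_neg hk0] at hk; omega
    have ht : ((n : ℤ) + k).toNat = n - j := by omega
    have hsymm : (2 * n).choose (n - j) = (2 * n).choose (n + j) := by
      have := Nat.choose_symm (show n + j ≤ 2 * n by omega)
      have h2 : 2 * n - (n + j) = n - j := by omega
      rw [h2] at this
      exact this
    rw [ht, hsymm, hjk]
    have : (-(j:ℝ))^2 = (j:ℝ)^2 := by ring
    rw [this]
    exact main_nat n j hn hjn
end

section
/- For every integer n ≥ 3 and every integer k with 0 ≤ k < n, one has log(C(2n,n+k) · 2^{-2n}) ≤ log(1/sqrt(π n)) - b_{k,n} - 1/(9n), where b_{k,n} = n·((1 + (k+1/2)/n)·log(1 + k/n) + (1 - (k-1/2)/n)·log(1 - k/n)). -/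
open Real Filter Topology Finset


lemma atanh_upper {t : ℝ} (ht0 : 0 < t) (ht : t ≤ 1/3) :
    Real.log (1+t) - Real.log (1-t) ≤ 2*t + 2*t^3/(3*(1-t^2)) := by
  have h1 : |t| < 1 := by rw [abs_of_pos ht0]; linarith
  have h2 : |(-t)| < 1 := by rwa [abs_neg]
  have e1 := Real.abs_log_sub_add_sum_range_le h1 7
  have e2 := Real.abs_log_sub_add_sum_range_le h2 7
  rw [abs_of_pos ht0] at e1
  rw [abs_neg, abs_of_pos ht0] at e2
  norm_num [Finset.sum_range_succ] at e1 e2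
  rw [abs_le] at e1 e2
  obtain ⟨e1l, e1r⟩ := e1
  obtain ⟨e2l, e2r⟩ := e2
  have h3 : (0:ℝ) < 1 - t := by linarith
  have h4 : (0:ℝ) < 1 - t^2 := by nlinarith
  have hd : t^8/(1-t) ≤ (3/2)*t^8 := by
    rw [div_le_iff₀ h3]; nlinarith [pow_pos ht0 8]
  have ht3 : t^3 ≤ 1/27 := by nlinarith
  have hpoly : 2*t^3/3 + 2*t^5/5 + 2*t^7/7 + 2*((3/2)*t^8) ≤ 2*t^3/(3*(1-t^2)) := by
    rw [le_div_iff₀ (by nlinarith : (0:ℝ) < 3*(1-t^2))]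
    nlinarith [pow_pos ht0 5, pow_pos ht0 7, pow_pos ht0 8, pow_pos ht0 3, sq_nonneg t]
  ring_nf at e1l e2r hd hpoly ⊢
  linarith

lemma atanh_lower {t : ℝ} (ht0 : 0 < t) (ht : t ≤ 1/3) :
    2*t + 2*t^3/3 ≤ Real.log (1+t) - Real.log (1-t) := by
  have h1 : |t| < 1 := by rw [abs_of_pos ht0]; linarith
  have h2 : |(-t)| < 1 := by rwa [abs_neg]
  have e1 := Real.abs_log_sub_add_sum_range_le h1 7
  have e2 := Real.abs_log_sub_add_sum_range_le h2 7
  rw [abs_of_pos ht0] at e1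
  rw [abs_neg, abs_of_pos ht0] at e2
  norm_num [Finset.sum_range_succ] at e1 e2
  rw [abs_le] at e1 e2
  obtain ⟨e1l, e1r⟩ := e1
  obtain ⟨e2l, e2r⟩ := e2
  have h3 : (0:ℝ) < 1 - t := by linarith
  have hd : t^8/(1-t) ≤ (3/2)*t^8 := by
    rw [div_le_iff₀ h3]; nlinarith [pow_pos ht0 8]
  have ht3 : t^3 ≤ 1/27 := by nlinarith
  have hpoly : 2*((3/2)*t^8) ≤ 2*t^5/5 + 2*t^7/7 := by
    nlinarith [pow_pos ht0 5, pow_pos ht0 7]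
  ring_nf at e1r e2l hd hpoly ⊢
  linarith

noncomputable def dSt (n : ℕ) : ℝ :=
  Real.log (n.factorial) - ((n:ℝ) + 1/2) * Real.log n + n

lemma log_succ_sub {x : ℝ} (hx : 1 ≤ x) :
    Real.log (x+1) - Real.log x =
      Real.log (1+1/(2*x+1)) - Real.log (1-1/(2*x+1)) := by
  have hx0 : (0:ℝ) < x := by linarith
  have h1 : (0:ℝ) < 2*x+1 := by linarith
  have e1 : 1+1/(2*x+1) = (2*(x+1))/(2*x+1) := by field_simp; ring
  have e2 : 1-1/(2*x+1) = (2*x)/(2*x+1) := by field_simp; ring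
  rw [e1, e2, Real.log_div (by positivity) (by positivity),
    Real.log_div (by positivity) (by positivity),
    Real.log_mul (by norm_num) (by positivity),
    Real.log_mul (by norm_num) (by positivity)]
  ring

lemma diff_upper {x : ℝ} (hx : 1 ≤ x) :
    (x+1/2)*(Real.log (x+1) - Real.log x) - 1 ≤ 1/(12*x) - 1/(12*(x+1)) := by
  have hx0 : (0:ℝ) < x := by linarith
  set t : ℝ := 1/(2*x+1) with htdef
  have ht0 : 0 < t := by positivity
  have ht : t ≤ 1/3 := by
    rw [htdef, div_le_div_iff₀ (by linarith) (by norm_num)]; linarith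
  rw [log_succ_sub hx]
  have hb := atanh_upper ht0 ht
  have hmul : (x+1/2)*(Real.log (1+t) - Real.log (1-t)) ≤
      (x+1/2)*(2*t + 2*t^3/(3*(1-t^2))) :=
    mul_le_mul_of_nonneg_left hb (by linarith)
  have heq : (x+1/2)*(2*t + 2*t^3/(3*(1-t^2))) - 1 = 1/(12*x) - 1/(12*(x+1)) := by
    rw [htdef]
    have h1 : (2*x+1) ≠ 0 := by positivity
    have h2 : 1 - (1/(2*x+1))^2 = (4*x*(x+1))/((2*x+1)^2) := by field_simp; ring
    rw [h2]
    field_simp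
    ring
  linarith

lemma diff_lower {x : ℝ} (hx : 1 ≤ x) :
    1/(12*x+1) - 1/(12*(x+1)+1) ≤ (x+1/2)*(Real.log (x+1) - Real.log x) - 1 := by
  have hx0 : (0:ℝ) < x := by linarith
  set t : ℝ := 1/(2*x+1) with htdef
  have ht0 : 0 < t := by positivity
  have ht : t ≤ 1/3 := by
    rw [htdef, div_le_div_iff₀ (by linarith) (by norm_num)]; linarith
  rw [log_succ_sub hx]
  have hb := atanh_lower ht0 ht
  have hmul : (x+1/2)*(2*t + 2*t^3/3) ≤
      (x+1/2)*(Real.log (1+t) - Real.log (1-t)) :=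
    mul_le_mul_of_nonneg_left hb (by linarith)
  have heq : (x+1/2)*(2*t + 2*t^3/3) - 1 = 1/(3*(2*x+1)^2) := by
    rw [htdef]; field_simp; ring
  have harith : 1/(12*x+1) - 1/(12*(x+1)+1) ≤ 1/(3*(2*x+1)^2) := by
    rw [div_sub_div _ _ (by positivity) (by positivity),
      div_le_div_iff₀ (by positivity) (by positivity)]
    nlinarith
  linarith

lemma dSt_diff (n : ℕ) (hn : 1 ≤ n) :
    dSt n - dSt (n+1) = (((n:ℝ))+1/2) * (Real.log ((n:ℝ)+1) - Real.log n) - 1 := by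
  have hn0 : (0:ℝ) < n := by exact_mod_cast hn
  simp only [dSt, Nat.factorial_succ]
  push_cast
  rw [Real.log_mul (by positivity) (by positivity : ((n.factorial :ℝ)) ≠ 0)]
  ring

lemma dSt_eq_log_stirling (n : ℕ) (hn : 1 ≤ n) :
    dSt n = Real.log (Stirling.stirlingSeq n) + (1/2) * Real.log 2 := by
  have hn0 : (0:ℝ) < n := by exact_mod_cast hn
  rw [Stirling.stirlingSeq,
    Real.log_div (by positivity : ((n.factorial:ℝ)) ≠ 0) (by positivity),
    Real.log_mul (by positivity) (by positivity),
    Real.log_sqrt (by positivity), Real.log_pow,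
    Real.log_div (by positivity) (Real.exp_ne_zero 1), Real.log_exp,
    Real.log_mul (by norm_num) (by positivity)]
  simp only [dSt]
  ring

lemma tendsto_dSt :
    Tendsto dSt atTop (𝓝 (Real.log (Real.sqrt (2*π)))) := by
  have hpi : Real.sqrt π ≠ 0 := by positivity
  have h1 : Tendsto (fun n => Real.log (Stirling.stirlingSeq n) + (1/2)*Real.log 2)
      atTop (𝓝 (Real.log (Real.sqrt π) + (1/2)*Real.log 2)) :=
    (Stirling.tendsto_stirlingSeq_sqrt_pi.log hpi).add tendsto_const_nhds
  have heq : Real.log (Real.sqrt π) + (1/2)*Real.log 2 = Real.log (Real.sqrt (2*π)) := by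
    rw [Real.log_sqrt Real.pi_pos.le, Real.log_sqrt (by positivity),
      Real.log_mul (by norm_num) (ne_of_gt Real.pi_pos)]
    ring
  rw [← heq]
  apply h1.congr'
  filter_upwards [eventually_ge_atTop 1] with n hn
  exact (dSt_eq_log_stirling n hn).symm

lemma tendsto_inv_lin (c : ℝ) (hc : 0 ≤ c) :
    Tendsto (fun n : ℕ => 1/(12*(n:ℝ)+c)) atTop (𝓝 0) := by
  simp only [one_div]
  apply Tendsto.inv_tendsto_atTop
  apply tendsto_atTop_add_const_right
  exact Tendsto.const_mul_atTop (by norm_num) tendsto_natCast_atTop_atTop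

lemma dSt_le (m : ℕ) (hm : 1 ≤ m) :
    dSt m ≤ Real.log (Real.sqrt (2*π)) + 1/(12*m) := by
  have hA : Tendsto (fun n : ℕ => dSt n - 1/(12*(n:ℝ)))
      atTop (𝓝 (Real.log (Real.sqrt (2*π)) - 0)) := by
    apply tendsto_dSt.sub
    simpa using tendsto_inv_lin 0 le_rfl
  have key : dSt m - 1/(12*(m:ℝ)) ≤ Real.log (Real.sqrt (2*π)) - 0 := by
    apply ge_of_tendsto hA
    filter_upwards [eventually_ge_atTop m] with n hn
    induction n, hn using Nat.le_induction with
    | base => exact le_refl _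
    | succ n hmn ih =>
      have hn1 : 1 ≤ n := le_trans hm hmn
      have hx : (1:ℝ) ≤ (n:ℝ) := by exact_mod_cast hn1
      have h := diff_upper hx
      have hd := dSt_diff n hn1
      have : dSt n - 1/(12*(n:ℝ)) ≤ dSt (n+1) - 1/(12*((n:ℝ)+1)) := by linarith
      push_cast
      push_cast at ih
      linarith
  linarith

lemma dSt_ge (m : ℕ) (hm : 1 ≤ m) :
    Real.log (Real.sqrt (2*π)) + 1/(12*m+1) ≤ dSt m := by
  have hA : Tendsto (fun n : ℕ => dSt n - 1/(12*(n:ℝ)+1))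
      atTop (𝓝 (Real.log (Real.sqrt (2*π)) - 0)) := by
    apply tendsto_dSt.sub
    exact tendsto_inv_lin 1 zero_le_one
  have key : Real.log (Real.sqrt (2*π)) - 0 ≤ dSt m - 1/(12*(m:ℝ)+1) := by
    apply le_of_tendsto hA
    filter_upwards [eventually_ge_atTop m] with n hn
    induction n, hn using Nat.le_induction with
    | base => exact le_refl _
    | succ n hmn ih =>
      have hn1 : 1 ≤ n := le_trans hm hmn
      have hx : (1:ℝ) ≤ (n:ℝ) := by exact_mod_cast hn1
      have h := diff_lower hx
      have hd := dSt_diff n hn1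
      have : dSt (n+1) - 1/(12*((n:ℝ)+1)+1) ≤ dSt n - 1/(12*(n:ℝ)+1) := by linarith
      push_cast
      push_cast at ih
      linarith
  linarith

set_option maxHeartbeats 1000000 in
theorem log_central_binom_bound (n k : ℕ) (hn : 3 ≤ n) (hk : k < n) :
    Real.log (((2 * n).choose (n + k) : ℝ) * 2 ^ (-(2 * n : ℤ))) ≤
      Real.log (1 / Real.sqrt (π * n)) -
        (n : ℝ) * ((1 + ((k : ℝ) + 1 / 2) / n) * Real.log (1 + (k : ℝ) / n) +
          (1 - ((k : ℝ) - 1 / 2) / n) * Real.log (1 - (k : ℝ) / n)) -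
        1 / (9 * n) := by
  have hkn : k ≤ n := hk.le
  have hn1 : 1 ≤ n := by omega
  have hn0 : (0:ℝ) < n := by exact_mod_cast hn1
  have hb1 : 1 ≤ n - k := by omega
  have ha1 : 1 ≤ n + k := by omega
  have hA0 : (0:ℝ) < (n:ℝ) + k := by positivity
  have hB0 : (0:ℝ) < (n:ℝ) - k := by
    have : (k:ℝ) < n := by exact_mod_cast hk
    linarith
  have hcastb : ((n - k : ℕ) : ℝ) = (n:ℝ) - k := by
    exact Nat.cast_sub hkn
  -- choose identity
  have hch : ((2*n).choose (n+k) : ℝ) =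
      ((2*n).factorial : ℝ) / (((n+k).factorial : ℝ) * ((n-k).factorial : ℝ)) := by
    have h := Nat.choose_mul_factorial_mul_factorial (show n + k ≤ 2*n by omega)
    have h2 : 2*n - (n+k) = n - k := by omega
    rw [h2] at h
    have := congrArg (fun x : ℕ => (x : ℝ)) h
    push_cast at this
    field_simp
    linarith [this]
  -- log of LHS
  have hfac : ∀ m : ℕ, 1 ≤ m → Real.log (m.factorial : ℝ)
      = dSt m + ((m:ℝ)+1/2) * Real.log m - m := by
    intro m hm
    simp only [dSt]; ring
  have hlogLHS : Real.log (((2 * n).choose (n + k) : ℝ) * 2 ^ (-(2 * n : ℤ)))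
      = Real.log ((2*n).factorial : ℝ) - Real.log ((n+k).factorial : ℝ)
        - Real.log ((n-k).factorial : ℝ) - (2*(n:ℝ)) * Real.log 2 := by
    have hchpos : (0:ℝ) < ((2*n).choose (n+k) : ℝ) := by
      exact_mod_cast Nat.choose_pos (show n + k ≤ 2*n by omega)
    rw [Real.log_mul (ne_of_gt hchpos) (by positivity), hch,
      Real.log_div (by positivity) (by positivity),
      Real.log_mul (by positivity) (by positivity), Real.log_zpow]
    push_cast
    ring
  -- factorial expansions
  have hf2n := hfac (2*n) (by omega)
  have hfa := hfac (n+k) ha1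
  have hfb := hfac (n-k) hb1
  -- log rewrites
  have hlog2n : Real.log ((2*n : ℕ) : ℝ) = Real.log 2 + Real.log n := by
    push_cast
    rw [Real.log_mul (by norm_num) (ne_of_gt hn0)]
  have hlogA : Real.log (1 + (k:ℝ)/n) = Real.log ((n:ℝ)+k) - Real.log n := by
    rw [show 1 + (k:ℝ)/n = ((n:ℝ)+k)/n by field_simp,
      Real.log_div (ne_of_gt hA0) (ne_of_gt hn0)]
  have hlogB : Real.log (1 - (k:ℝ)/n) = Real.log ((n:ℝ)-k) - Real.log n := by
    rw [show 1 - (k:ℝ)/n = ((n:ℝ)-k)/n by field_simp,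
      Real.log_div (ne_of_gt hB0) (ne_of_gt hn0)]
  have hlogpin : Real.log (1 / Real.sqrt (π * n)) =
      -(1/2)*Real.log π - (1/2)*Real.log n := by
    rw [one_div, Real.log_inv, Real.log_sqrt (by positivity),
      Real.log_mul (ne_of_gt Real.pi_pos) (ne_of_gt hn0)]
    ring
  have hLsplit : Real.log (Real.sqrt (2*π)) = (1/2)*Real.log 2 + (1/2)*Real.log π := by
    rw [Real.log_sqrt (by positivity), Real.log_mul (by norm_num) (ne_of_gt Real.pi_pos)]
    ring
  have hbkn : (n:ℝ) * ((1 + ((k:ℝ)+1/2)/n) * (Real.log ((n:ℝ)+k) - Real.log n)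
      + (1 - ((k:ℝ)-1/2)/n) * (Real.log ((n:ℝ)-k) - Real.log n))
      = ((n:ℝ)+k+1/2)*Real.log ((n:ℝ)+k) + ((n:ℝ)-k+1/2)*Real.log ((n:ℝ)-k)
        - (2*(n:ℝ)+1)*Real.log n := by
    field_simp
    ring
  -- Robbins bounds
  have hR1 := dSt_le (2*n) (by omega)
  have hR2 := dSt_ge (n+k) ha1
  have hR3 := dSt_ge (n-k) hb1
  rw [hLsplit] at hR1 hR2 hR3
  push_cast [hcastb] at hR1 hR2 hR3
  -- arithmetic
  have hx1 : (1:ℝ) ≤ (n:ℝ) := by exact_mod_cast hn1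
  have e1 : 2/(12*(n:ℝ)+1) ≤ 1/(12*((n:ℝ)+k)+1) + 1/(12*((n:ℝ)-k)+1) := by
    rw [div_add_div _ _ (by positivity) (by positivity),
      div_le_div_iff₀ (by positivity) (by positivity)]
    nlinarith [sq_nonneg ((k:ℝ))]
  have e2 : 1/(24*(n:ℝ)) + 1/(9*(n:ℝ)) ≤ 2/(12*(n:ℝ)+1) := by
    rw [div_add_div _ _ (by positivity) (by positivity),
      div_le_div_iff₀ (by positivity) (by positivity)]
    nlinarith [hx1, hn0]
  -- final assembly
  rw [hlogLHS, hf2n, hfa, hfb, hlogpin, hlogA, hlogB, hbkn, hlog2n]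
  push_cast [hcastb]
  have e3 : 1/(12*(2*(n:ℝ))) = 1/(24*(n:ℝ)) := by ring_nf
  rw [e3] at hR1
  linarith
end

section
/- For every integer n ≥ 3 and every integer k with 0 ≤ k < n, the quantity b_{k,n} defined by b_{k,n} = n·((1 + (k+1/2)/n)·log(1 + k/n) + (1 - (k-1/2)/n)·log(1 - k/n)) satisfies b_{k,n} > k^2/n - 3/(4n). -/
open Real

private lemma logP_bound (u : ℝ) (hu : 0 ≤ u) :
    u - u^2/2 + u^3/3 - u^4/4 + u^5/5 - u^6/6 + u^7/7 - u^8/8 + u^9/9 - u^10/10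
      ≤ Real.log (1 + u) := by
  set f : ℝ → ℝ := fun y => Real.log (1 + y) -
    (y - y^2/2 + y^3/3 - y^4/4 + y^5/5 - y^6/6 + y^7/7 - y^8/8 + y^9/9 - y^10/10) with hf
  have key : ∀ x : ℝ, 0 ≤ x → HasDerivAt f (x^10/(1+x)) x := by
    intro x hx
    have hx1 : (0:ℝ) < 1 + x := by linarith
    have h1 : HasDerivAt (fun y : ℝ => 1 + y) 1 x := by
      simpa using (hasDerivAt_id x).const_add 1
    have h2 : HasDerivAt (fun y : ℝ => Real.log (1 + y)) (1/(1+x)) x := by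
      simpa using h1.log (ne_of_gt hx1)
    have h3 : HasDerivAt (fun y : ℝ =>
        y - y^2/2 + y^3/3 - y^4/4 + y^5/5 - y^6/6 + y^7/7 - y^8/8 + y^9/9 - y^10/10)
        (1 - (2*x^1)/2 + (3*x^2)/3 - (4*x^3)/4 + (5*x^4)/5 - (6*x^5)/6 + (7*x^6)/7
          - (8*x^7)/8 + (9*x^8)/9 - (10*x^9)/10) x := by
      exact (((((((((hasDerivAt_id x).sub ((hasDerivAt_pow 2 x).div_const 2)).add
        ((hasDerivAt_pow 3 x).div_const 3)).sub ((hasDerivAt_pow 4 x).div_const 4)).add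
        ((hasDerivAt_pow 5 x).div_const 5)).sub ((hasDerivAt_pow 6 x).div_const 6)).add
        ((hasDerivAt_pow 7 x).div_const 7)).sub ((hasDerivAt_pow 8 x).div_const 8)).add
        ((hasDerivAt_pow 9 x).div_const 9)).sub ((hasDerivAt_pow 10 x).div_const 10)
    have h4 := h2.sub h3
    refine h4.congr_deriv ?_
    field_simp
    ring
  have mono : MonotoneOn f (Set.Icc 0 u) := by
    apply monotoneOn_of_deriv_nonneg (convex_Icc 0 u)
    · intro x hx
      exact (key x hx.1).continuousAt.continuousWithinAt
    · intro x hx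
      rw [interior_Icc] at hx
      exact (key x hx.1.le).differentiableAt.differentiableWithinAt
    · intro x hx
      rw [interior_Icc] at hx
      rw [(key x hx.1.le).deriv]
      have : (0:ℝ) < 1 + x := by linarith [hx.1]
      positivity
  have h0 : f 0 ≤ f u := mono (Set.left_mem_Icc.2 hu) (Set.right_mem_Icc.2 hu) hu
  have hf0 : f 0 = 0 := by simp [hf]
  rw [hf0] at h0
  simp only [hf] at h0
  linarith

private lemma logQ_bound (u : ℝ) (hu : 0 ≤ u) (hu1 : u < 1) :
    -(u + u^2/2 + u^3/3 + u^4/4 + u^5/5 + u^6/6 + u^7/7 + u^8/8 + u^9/9)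
      - u^10/(10*(1-u)) ≤ Real.log (1 - u) := by
  set f : ℝ → ℝ := fun y => Real.log (1 - y) +
    (y + y^2/2 + y^3/3 + y^4/4 + y^5/5 + y^6/6 + y^7/7 + y^8/8 + y^9/9)
    + y^10/(10*(1-y)) with hf
  have key : ∀ x : ℝ, 0 ≤ x → x < 1 → HasDerivAt f (x^10/(10*(1-x)^2)) x := by
    intro x hx hx1
    have hx2 : (0:ℝ) < 1 - x := by linarith
    have h1 : HasDerivAt (fun y : ℝ => 1 - y) (-1) x := by
      exact (hasDerivAt_id' x).const_sub 1
    have h2 : HasDerivAt (fun y : ℝ => Real.log (1 - y)) (-1/(1-x)) x :=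
      h1.log (ne_of_gt hx2)
    have h3 : HasDerivAt (fun y : ℝ =>
        y + y^2/2 + y^3/3 + y^4/4 + y^5/5 + y^6/6 + y^7/7 + y^8/8 + y^9/9)
        (1 + (2*x^1)/2 + (3*x^2)/3 + (4*x^3)/4 + (5*x^4)/5 + (6*x^5)/6 + (7*x^6)/7
          + (8*x^7)/8 + (9*x^8)/9) x := by
      exact ((((((((hasDerivAt_id x).add ((hasDerivAt_pow 2 x).div_const 2)).add
        ((hasDerivAt_pow 3 x).div_const 3)).add ((hasDerivAt_pow 4 x).div_const 4)).add
        ((hasDerivAt_pow 5 x).div_const 5)).add ((hasDerivAt_pow 6 x).div_const 6)).add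
        ((hasDerivAt_pow 7 x).div_const 7)).add ((hasDerivAt_pow 8 x).div_const 8)).add
        ((hasDerivAt_pow 9 x).div_const 9)
    have hden : HasDerivAt (fun y : ℝ => 10*(1-y)) (-10) x := by
      simpa using h1.const_mul (10:ℝ)
    have hdenne : 10*(1-x) ≠ 0 := by positivity
    have h4 : HasDerivAt (fun y : ℝ => y^10/(10*(1-y)))
        (((10:ℕ)*x^9*(10*(1-x)) - x^10*(-10))/(10*(1-x))^2) x :=
      (hasDerivAt_pow 10 x).div hden hdenne
    have h5 := (h2.add h3).add h4
    refine h5.congr_deriv ?_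
    field_simp
    ring
  have mono : MonotoneOn f (Set.Icc 0 u) := by
    apply monotoneOn_of_deriv_nonneg (convex_Icc 0 u)
    · intro x hx
      exact (key x hx.1 (lt_of_le_of_lt hx.2 hu1)).continuousAt.continuousWithinAt
    · intro x hx
      rw [interior_Icc] at hx
      exact (key x hx.1.le (lt_trans hx.2 hu1)).differentiableAt.differentiableWithinAt
    · intro x hx
      rw [interior_Icc] at hx
      rw [(key x hx.1.le (lt_trans hx.2 hu1)).deriv]
      have : (0:ℝ) < 1 - x := by linarith [lt_trans hx.2 hu1]
      positivity
  have h0 : f 0 ≤ f u := mono (Set.left_mem_Icc.2 hu) (Set.right_mem_Icc.2 hu) hu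
  have hf0 : f 0 = 0 := by norm_num [hf]
  rw [hf0] at h0
  simp only [hf] at h0
  linarith

set_option maxHeartbeats 2000000 in
private lemma R1q_pos (u : ℝ) (hu : 0 ≤ u) (h34 : u ≤ 3/4) :
    0 < 100 + -200*u + 80*u^2 + 40*u^3 + (-1445/21)*u^4 + (2050/21)*u^5 + (-2215/21)*u^6 + (-20/3)*u^7 + (965/9)*u^8 + (110/9)*u^9 + (-835/9)*u^10 + (190/3)*u^11 + (-185/4)*u^12 + (65/2)*u^13 + (-275/12)*u^14 + 15*u^15 + -9*u^16 + 4*u^17 + -1*u^18 := by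
  have hv : (0:ℝ) ≤ 3/4 - u := by linarith
  have cert : 100 + -200*u + 80*u^2 + 40*u^3 + (-1445/21)*u^4 + (2050/21)*u^5 + (-2215/21)*u^6 + (-20/3)*u^7 + (965/9)*u^8 + (110/9)*u^9 + (-835/9)*u^10 + (190/3)*u^11 + (-185/4)*u^12 + (65/2)*u^13 + (-275/12)*u^14 + 15*u^15 + -9*u^16 + 4*u^17 + -1*u^18 - 1 = (755914244096/43046721)*((3/4) - u)^18 + (37383395344384/129140163)*u^1*((3/4) - u)^17 + (289583874965504/129140163)*u^2*((3/4) - u)^16 + (1400064849215488/129140163)*u^3*((3/4) - u)^15 + (33122775707156480/903981141)*u^4*((3/4) - u)^14 + (83046471741472768/903981141)*u^5*((3/4) - u)^13 + (159947031056482304/903981141)*u^6*((3/4) - u)^12 + (34529846537224192/129140163)*u^7*((3/4) - u)^11 + (290140493576142848/903981141)*u^8*((3/4) - u)^10 + (278206559805767680/903981141)*u^9*((3/4) - u)^9 + (213061067464572928/903981141)*u^10*((3/4) - u)^8 + (129546037801877504/903981141)*u^11*((3/4) - u)^7 + (61744548455885824/903981141)*u^12*((3/4) - u)^6 + (22575325141349888/903981141)*u^13*((3/4)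 - u)^5 + (873591871585600/129140163)*u^14*((3/4) - u)^4 + (1159133690113856/903981141)*u^15*((3/4) - u)^3 + (138922178905072/903981141)*u^16*((3/4) - u)^2 + (8471093990288/903981141)*u^17*((3/4) - u)^1 + (118978950091/903981141)*u^18 := by ring
  linarith [mul_nonneg (pow_nonneg hu 0) (pow_nonneg hv 18), mul_nonneg (pow_nonneg hu 1) (pow_nonneg hv 17), mul_nonneg (pow_nonneg hu 2) (pow_nonneg hv 16), mul_nonneg (pow_nonneg hu 3) (pow_nonneg hv 15), mul_nonneg (pow_nonneg hu 4) (pow_nonneg hv 14), mul_nonneg (pow_nonneg hu 5) (pow_nonneg hv 13), mul_nonneg (pow_nonneg hu 6) (pow_nonneg hv 12), mul_nonneg (pow_nonneg hu 7) (pow_nonneg hv 11), mul_nonneg (pow_nonneg hu 8) (pow_nonneg hv 10), mul_nonneg (pow_nonneg hu 9) (pow_nonneg hv 9), mul_nonneg (pow_nonneg hu 10) (pow_nonneg hv 8), mul_nonneg (pow_nonneg hu 11) (pow_nonneg hv 7), mul_nonneg (pow_nonneg hu 12) (pow_nonneg hv 6), mul_nonneg (pow_nonneg hu 13) (pow_nonneg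 hv 5), mul_nonneg (pow_nonneg hu 14) (pow_nonneg hv 4), mul_nonneg (pow_nonneg hu 15) (pow_nonneg hv 3), mul_nonneg (pow_nonneg hu 16) (pow_nonneg hv 2), mul_nonneg (pow_nonneg hu 17) (pow_nonneg hv 1), mul_nonneg (pow_nonneg hu 18) (pow_nonneg hv 0)]

set_option maxHeartbeats 2000000 in
private lemma R2_nonneg (u : ℝ) (h1 : 3/4 ≤ u) (h2 : u ≤ 9/10) :
    0 ≤ -30 + 60*u + -20*u^2 + -10*u^3 + 5*u^4 + -5*u^5 + (10/3)*u^6 + (-10/3)*u^7 + (5/2)*u^8 + (-5/2)*u^9 + 2*u^10 + -1*u^11 := by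
  have ha : (0:ℝ) ≤ u - 3/4 := by linarith
  have hb : (0:ℝ) ≤ 9/10 - u := by linarith
  have cert : -30 + 60*u + -20*u^2 + -10*u^3 + 5*u^4 + -5*u^5 + (10/3)*u^6 + (-10/3)*u^7 + (5/2)*u^8 + (-5/2)*u^9 + 2*u^10 + -1*u^11 = (14201904296875/59049)*((9/10) - u)^11 + (315401621093750/59049)*(u - (3/4))^1*((9/10) - u)^10 + (2308116367187500/59049)*(u - (3/4))^2*((9/10) - u)^9 + (2972851328125000/19683)*(u - (3/4))^3*((9/10) - u)^8 + (7138998612500000/19683)*(u - (3/4))^4*((9/10) - u)^7 + (11469334825000000/19683)*(u - (3/4))^5*((9/10) - u)^6 + (12742457549200000/19683)*(u - (3/4))^6*((9/10) - u)^5 + (9862605620000000/19683)*(u - (3/4))^7*((9/10) - u)^4 + (5234968057120000/19683)*(u - (3/4))^8*((9/10) - u)^3 + (5459092687552000/59049)*(u - (3/4))^9*((9/10) - u)^2 + (1120112882048000/59049)*(u - (3/4))^10*((9/10) - u)^1 + (102834181912576/59049)*(u - (3/4))^11 := by ring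
  linarith [mul_nonneg (pow_nonneg ha 0) (pow_nonneg hb 11), mul_nonneg (pow_nonneg ha 1) (pow_nonneg hb 10), mul_nonneg (pow_nonneg ha 2) (pow_nonneg hb 9), mul_nonneg (pow_nonneg ha 3) (pow_nonneg hb 8), mul_nonneg (pow_nonneg ha 4) (pow_nonneg hb 7), mul_nonneg (pow_nonneg ha 5) (pow_nonneg hb 6), mul_nonneg (pow_nonneg ha 6) (pow_nonneg hb 5), mul_nonneg (pow_nonneg ha 7) (pow_nonneg hb 4), mul_nonneg (pow_nonneg ha 8) (pow_nonneg hb 3), mul_nonneg (pow_nonneg ha 9) (pow_nonneg hb 2), mul_nonneg (pow_nonneg ha 10) (pow_nonneg hb 1), mul_nonneg (pow_nonneg ha 11) (pow_nonneg hb 0)]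

set_option maxHeartbeats 2000000 in
private lemma R3_pos (u : ℝ) (h1 : 3/4 ≤ u) (h2 : u ≤ 9/10) :
    0 < 15 + -30*u + 5*u^2 + 10*u^3 + (-5/3)*u^4 + 5*u^5 + -2*u^6 + (10/3)*u^7 + (-25/14)*u^8 + (5/2)*u^9 + (-14/9)*u^10 + -1*u^11 := by
  have ha : (0:ℝ) ≤ u - 3/4 := by linarith
  have hb : (0:ℝ) ≤ 9/10 - u := by linarith
  have cert : 15 + -30*u + 5*u^2 + 10*u^3 + (-5/3)*u^4 + 5*u^5 + -2*u^6 + (10/3)*u^7 + (-25/14)*u^8 + (5/2)*u^9 + (-14/9)*u^10 + -1*u^11 - 1/10 = (83899521484375/1240029)*((9/10) - u)^11 + (111444863281250/177147)*(u - (3/4))^1*((9/10) - u)^10 + (4543513867187500/1240029)*(u - (3/4))^2*((9/10) - u)^9 + (6584226953125000/413343)*(u - (3/4))^3*((9/10) - u)^8 + (20123014962500000/413343)*(u - (3/4))^4*((9/10) - u)^7 + (6004384531000000/59049)*(u - (3/4))^5*((9/10) - u)^6 + (8585467212400000/59049)*(u - (3/4))^6*((9/10) - u)^5 + (58889046183200000/413343)*(u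 - (3/4))^7*((9/10) - u)^4 + (5567169735520000/59049)*(u - (3/4))^8*((9/10) - u)^3 + (50046566710720000/1240029)*(u - (3/4))^9*((9/10) - u)^2 + (12533141356190720/1240029)*(u - (3/4))^10*((9/10) - u)^1 + (1396400223778816/1240029)*(u - (3/4))^11 := by ring
  linarith [mul_nonneg (pow_nonneg ha 0) (pow_nonneg hb 11), mul_nonneg (pow_nonneg ha 1) (pow_nonneg hb 10), mul_nonneg (pow_nonneg ha 2) (pow_nonneg hb 9), mul_nonneg (pow_nonneg ha 3) (pow_nonneg hb 8), mul_nonneg (pow_nonneg ha 4) (pow_nonneg hb 7), mul_nonneg (pow_nonneg ha 5) (pow_nonneg hb 6), mul_nonneg (pow_nonneg ha 6) (pow_nonneg hb 5), mul_nonneg (pow_nonneg ha 7) (pow_nonneg hb 4), mul_nonneg (pow_nonneg ha 8) (pow_nonneg hb 3), mul_nonneg (pow_nonneg ha 9) (pow_nonneg hb 2), mul_nonneg (pow_nonneg ha 10) (pow_nonneg hb 1), mul_nonneg (pow_nonneg ha 11) (pow_nonneg hb 0)]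

set_option maxHeartbeats 4000000 in
private lemma Hpos (u t : ℝ) (hu : 0 ≤ u) (ht : 0 < t) (hut : u + 2*t ≤ 1) :
    0 < (1+u+t) * Real.log (1+u) + (1-u+t) * Real.log (1-u) - u^2 + 3*t^2 := by
  have hu1 : u < 1 := by linarith
  have hD : (0:ℝ) < 1 - u := by linarith
  rcases le_or_gt u (9/10) with h910 | h910
  · -- u ≤ 9/10 : use polynomial log bounds
    have hP := logP_bound u hu
    have hQ := logQ_bound u hu hu1
    have hc1 : (0:ℝ) ≤ 1 + u + t := by linarith
    have hc2 : (0:ℝ) ≤ 1 - u + t := by linarith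
    have m1 := mul_le_mul_of_nonneg_left hP hc1
    have m2 := mul_le_mul_of_nonneg_left hQ hc2
    have hGoal : 0 < (1+u+t) * (1*u + (-1/2)*u^2 + (1/3)*u^3 + (-1/4)*u^4 + (1/5)*u^5 + (-1/6)*u^6 + (1/7)*u^7 + (-1/8)*u^8 + (1/9)*u^9 + (-1/10)*u^10)
        + (1-u+t) * (-(1*u + (1/2)*u^2 + (1/3)*u^3 + (1/4)*u^4 + (1/5)*u^5 + (1/6)*u^6 + (1/7)*u^7 + (1/8)*u^8 + (1/9)*u^9) - u^10/(10*(1-u))) - u^2 + 3*t^2 := by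
      rcases le_or_gt u (3/4) with h34 | h34
      · -- case 1
        have hR1 := R1q_pos u hu h34
        have hiden : 1200*(1-u)^2 * ((1+u+t) * (1*u + (-1/2)*u^2 + (1/3)*u^3 + (-1/4)*u^4 + (1/5)*u^5 + (-1/6)*u^6 + (1/7)*u^7 + (-1/8)*u^8 + (1/9)*u^9 + (-1/10)*u^10)
            + (1-u+t) * (-(1*u + (1/2)*u^2 + (1/3)*u^3 + (1/4)*u^4 + (1/5)*u^5 + (1/6)*u^6 + (1/7)*u^7 + (1/8)*u^8 + (1/9)*u^9) - u^10/(10*(1-u))) - u^2 + 3*t^2)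
            = (60*t*(1-u) + (-10*u^2 + 10*u^3 + -5*u^4 + 5*u^5 + (-10/3)*u^6 + (10/3)*u^7 + (-5/2)*u^8 + (5/2)*u^9 + -2*u^10 + 1*u^11))^2 + u^4 * (100 + -200*u + 80*u^2 + 40*u^3 + (-1445/21)*u^4 + (2050/21)*u^5 + (-2215/21)*u^6 + (-20/3)*u^7 + (965/9)*u^8 + (110/9)*u^9 + (-835/9)*u^10 + (190/3)*u^11 + (-185/4)*u^12 + (65/2)*u^13 + (-275/12)*u^14 + 15*u^15 + -9*u^16 + 4*u^17 + -1*u^18) := by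
          field_simp
          ring
        have hA : (0:ℝ) < 1200*(1-u)^2 := by positivity
        rcases eq_or_lt_of_le hu with h0u | h0u
        · rw [← h0u]
          norm_num
          positivity
        · have hpos : 0 < (60*t*(1-u) + (-10*u^2 + 10*u^3 + -5*u^4 + 5*u^5 + (-10/3)*u^6 + (10/3)*u^7 + (-5/2)*u^8 + (5/2)*u^9 + -2*u^10 + 1*u^11))^2 + u^4 * (100 + -200*u + 80*u^2 + 40*u^3 + (-1445/21)*u^4 + (2050/21)*u^5 + (-2215/21)*u^6 + (-20/3)*u^7 + (965/9)*u^8 + (110/9)*u^9 + (-835/9)*u^10 + (190/3)*u^11 + (-185/4)*u^12 + (65/2)*u^13 + (-275/12)*u^14 + 15*u^15 + -9*u^16 + 4*u^17 + -1*u^18) :=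
            add_pos_of_nonneg_of_pos (sq_nonneg _) (mul_pos (pow_pos h0u 4) hR1)
          have hlt : (1200*(1-u)^2) * 0 < 1200*(1-u)^2 * ((1+u+t) * (1*u + (-1/2)*u^2 + (1/3)*u^3 + (-1/4)*u^4 + (1/5)*u^5 + (-1/6)*u^6 + (1/7)*u^7 + (-1/8)*u^8 + (1/9)*u^9 + (-1/10)*u^10)
              + (1-u+t) * (-(1*u + (1/2)*u^2 + (1/3)*u^3 + (1/4)*u^4 + (1/5)*u^5 + (1/6)*u^6 + (1/7)*u^7 + (1/8)*u^8 + (1/9)*u^9) - u^10/(10*(1-u))) - u^2 + 3*t^2) := by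
            rw [mul_zero, hiden]
            exact hpos
          exact lt_of_mul_lt_mul_left hlt hA.le
      · -- case 2 : 3/4 < u ≤ 9/10
        have hR2 := R2_nonneg u h34.le h910
        have hR3 := R3_pos u h34.le h910
        have hτ : (0:ℝ) ≤ (1-u) - 2*t := by linarith
        have h5 : 30*(1-u)*t + 15*(1-u)^2 + (-10*u^2 + 10*u^3 + -5*u^4 + 5*u^5 + (-10/3)*u^6 + (10/3)*u^7 + (-5/2)*u^8 + (5/2)*u^9 + -2*u^10 + 1*u^11) ≤ 0 := by
          linarith [mul_nonneg hD.le hτ, hR2]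
        have h6 : 0 ≤ ((1-u)/2 - t) * (-(30*(1-u)*t + 15*(1-u)^2 + (-10*u^2 + 10*u^3 + -5*u^4 + 5*u^5 + (-10/3)*u^6 + (10/3)*u^7 + (-5/2)*u^8 + (5/2)*u^9 + -2*u^10 + 1*u^11))) :=
          mul_nonneg (by linarith) (by linarith)
        have h7 : 0 < (1-u) * (15 + -30*u + 5*u^2 + 10*u^3 + (-5/3)*u^4 + 5*u^5 + -2*u^6 + (10/3)*u^7 + (-25/14)*u^8 + (5/2)*u^9 + (-14/9)*u^10 + -1*u^11) := mul_pos hD hR3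
        have hZ : 0 < 30*(1-u)*t^2 + t*(-10*u^2 + 10*u^3 + -5*u^4 + 5*u^5 + (-10/3)*u^6 + (10/3)*u^7 + (-5/2)*u^8 + (5/2)*u^9 + -2*u^10 + 1*u^11) + 10*(1-u)*((1/6)*u^4 + (1/15)*u^6 + (1/28)*u^8 + (1/45)*u^10 + (-1/10)*u^11) := by
          linarith [h6, h7]
        have hiden : (10*(1-u)) * ((1+u+t) * (1*u + (-1/2)*u^2 + (1/3)*u^3 + (-1/4)*u^4 + (1/5)*u^5 + (-1/6)*u^6 + (1/7)*u^7 + (-1/8)*u^8 + (1/9)*u^9 + (-1/10)*u^10)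
            + (1-u+t) * (-(1*u + (1/2)*u^2 + (1/3)*u^3 + (1/4)*u^4 + (1/5)*u^5 + (1/6)*u^6 + (1/7)*u^7 + (1/8)*u^8 + (1/9)*u^9) - u^10/(10*(1-u))) - u^2 + 3*t^2)
            = 30*(1-u)*t^2 + t*(-10*u^2 + 10*u^3 + -5*u^4 + 5*u^5 + (-10/3)*u^6 + (10/3)*u^7 + (-5/2)*u^8 + (5/2)*u^9 + -2*u^10 + 1*u^11) + 10*(1-u)*((1/6)*u^4 + (1/15)*u^6 + (1/28)*u^8 + (1/45)*u^10 + (-1/10)*u^11) := by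
          field_simp
          ring
        have hA : (0:ℝ) < 10*(1-u) := by linarith
        have hlt : (10*(1-u)) * 0 < (10*(1-u)) * ((1+u+t) * (1*u + (-1/2)*u^2 + (1/3)*u^3 + (-1/4)*u^4 + (1/5)*u^5 + (-1/6)*u^6 + (1/7)*u^7 + (-1/8)*u^8 + (1/9)*u^9 + (-1/10)*u^10)
            + (1-u+t) * (-(1*u + (1/2)*u^2 + (1/3)*u^3 + (1/4)*u^4 + (1/5)*u^5 + (1/6)*u^6 + (1/7)*u^7 + (1/8)*u^8 + (1/9)*u^9) - u^10/(10*(1-u))) - u^2 + 3*t^2) := by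
          rw [mul_zero, hiden]
          exact hZ
        exact lt_of_mul_lt_mul_left hlt hA.le
    linarith
  · -- case 3 : u > 9/10
    have hcu : (0:ℝ) < 1 + u := by linarith
    have l1 : Real.log 2 + 1 - 2/(1+u) ≤ Real.log (1+u) := by
      have h := Real.log_le_sub_one_of_pos (show (0:ℝ) < 2/(1+u) by positivity)
      rw [Real.log_div (by norm_num) (ne_of_gt hcu)] at h
      linarith
    have l2 : 1 - 1/(10*(1-u)) - Real.log 10 ≤ Real.log (1-u) := by
      have h := Real.log_le_sub_one_of_pos (show (0:ℝ) < 1/(10*(1-u)) by positivity)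
      rw [one_div, Real.log_inv, Real.log_mul (by norm_num) (ne_of_gt hD)] at h
      rw [one_div]
      linarith
    have l3 : Real.log 10 ≤ (10/3) * Real.log 2 := by
      have h : Real.log ((10:ℝ)^3) ≤ Real.log ((2:ℝ)^10) := by
        apply Real.log_le_log (by norm_num)
        norm_num
      rw [Real.log_pow, Real.log_pow] at h
      push_cast at h
      linarith
    have hl2 := Real.log_two_gt_d9
    have hc1 : (0:ℝ) ≤ 1 + u + t := by linarith
    have hc2 : (0:ℝ) ≤ 1 - u + t := by linarith
    have m1 := mul_le_mul_of_nonneg_left l1 hc1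
    have m2 := mul_le_mul_of_nonneg_left l2 hc2
    have e1 : (1+u+t) * (2/(1+u)) ≤ 2 + (20/19)*t := by
      rw [mul_div_assoc']
      rw [div_le_iff₀ hcu]
      nlinarith [mul_nonneg ht.le (show (0:ℝ) ≤ 20*u - 18 by linarith)]
    have e2 : (1-u+t) * (1/(10*(1-u))) ≤ 3/20 := by
      rw [mul_one_div]
      rw [div_le_iff₀ (by positivity : (0:ℝ) < 10*(1-u))]
      linarith
    have hM : (1-u+t) * Real.log 10 ≤ (1-u+t) * ((10/3) * Real.log 2) :=
      mul_le_mul_of_nonneg_left l3 hc2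
    have hL : 0 ≤ ((13*u - 7 - 7*t)/3) * (Real.log 2 - 0.6931471803) := by
      apply mul_nonneg
      · have : 2*t ≤ 1 - u := by linarith
        linarith
      · linarith
    nlinarith [m1, m2, e1, e2, hM, hL, ht,
      mul_nonneg (show (0:ℝ) ≤ 1 - u by linarith) (show (0:ℝ) ≤ u - 9/10 by linarith),
      sq_nonneg t, mul_pos ht ht]

theorem b_kn_lower_bound (n k : ℕ) (hn : 3 ≤ n) (hk : k < n) :
    (n : ℝ) * ((1 + ((k : ℝ) + 1 / 2) / n) * Real.log (1 + (k : ℝ) / n) +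
        (1 - ((k : ℝ) - 1 / 2) / n) * Real.log (1 - (k : ℝ) / n)) >
      (k : ℝ) ^ 2 / n - 3 / (4 * n) := by
  have hn0 : (0:ℝ) < n := by positivity
  have hnne : (n:ℝ) ≠ 0 := ne_of_gt hn0
  have hk0 : (0:ℝ) ≤ (k:ℝ) := Nat.cast_nonneg k
  have hkn : (k:ℝ) + 1 ≤ n := by exact_mod_cast hk
  have h1 : (0:ℝ) ≤ (k:ℝ)/n := by positivity
  have h2 : (0:ℝ) < 1/(2*(n:ℝ)) := by positivity
  have h3 : (k:ℝ)/n + 2*(1/(2*(n:ℝ))) ≤ 1 := by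
    have e : (k:ℝ)/n + 2*(1/(2*(n:ℝ))) = ((k:ℝ)+1)/n := by
      field_simp
    rw [e, div_le_one hn0]
    linarith
  have H := Hpos ((k:ℝ)/n) (1/(2*(n:ℝ))) h1 h2 h3
  have e1 : 1 + ((k:ℝ) + 1/2)/n = 1 + (k:ℝ)/n + 1/(2*(n:ℝ)) := by
    field_simp
    ring
  have e2 : 1 - ((k:ℝ) - 1/2)/n = 1 - (k:ℝ)/n + 1/(2*(n:ℝ)) := by
    field_simp
    ring
  rw [e1, e2]
  set L1 := Real.log (1 + (k:ℝ)/n)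
  set L2 := Real.log (1 - (k:ℝ)/n)
  have key : (n:ℝ) * ((1 + (k:ℝ)/n + 1/(2*(n:ℝ))) * L1 + (1 - (k:ℝ)/n + 1/(2*(n:ℝ))) * L2)
      - ((k:ℝ)^2/n - 3/(4*n))
      = n * ((1 + (k:ℝ)/n + 1/(2*(n:ℝ))) * L1 + (1 - (k:ℝ)/n + 1/(2*(n:ℝ))) * L2
        - ((k:ℝ)/n)^2 + 3*(1/(2*(n:ℝ)))^2) := by
    field_simp
    ring
  have hnH : 0 < (n:ℝ) * ((1 + (k:ℝ)/n + 1/(2*(n:ℝ))) * L1 + (1 - (k:ℝ)/n + 1/(2*(n:ℝ))) * L2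
        - ((k:ℝ)/n)^2 + 3*(1/(2*(n:ℝ)))^2) := mul_pos hn0 H
  linarith
end

section
/- Let m be a positive integer and define t(k) = log(2 - k/m) - (2m^2 - m - 2k^2)/(2m(2m-1)) for real k with 0 ≤ k ≤ m. Then t(k) ≥ 0 for all k in [0, m]. -/
open Real

lemma key_log_ineq (x : ℝ) (hx0 : 0 ≤ x) (hx1 : x ≤ 1) :
    (1 - x ^ 2) / 2 ≤ Real.log (2 - x) := by
  set f : ℝ → ℝ := fun y => Real.log (2 - y) - (1 - y ^ 2) / 2 with hf
  have hderiv : ∀ y ∈ Set.Ioo (0:ℝ) 1, HasDerivAt f ((-1) / (2 - y) - (-(2 * y ^ 1)) / 2) y := by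
    intro y hy
    have h2y : (2 : ℝ) - y ≠ 0 := by
      have := hy.2; linarith
    have h1 : HasDerivAt (fun z : ℝ => 2 - z) (-1) y := by
      simpa using (hasDerivAt_id' y).const_sub (2:ℝ)
    have h2 : HasDerivAt (fun z : ℝ => Real.log (2 - z)) ((-1) / (2 - y)) y :=
      h1.log h2y
    have h3 : HasDerivAt (fun z : ℝ => (1 - z ^ 2) / 2) ((-(2 * y ^ 1)) / 2) y := by
      exact (((hasDerivAt_const y (1:ℝ)).sub (hasDerivAt_pow 2 y)).div_const 2).congr_deriv
        (by ring)
    exact h2.sub h3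
  have hanti : AntitoneOn f (Set.Icc 0 1) := by
    apply antitoneOn_of_deriv_nonpos (convex_Icc 0 1)
    · apply ContinuousOn.sub
      · apply ContinuousOn.log (by fun_prop)
        intro y hy
        have := hy.2; simp only [Set.mem_Icc] at hy; intro h; linarith [hy.2]
      · fun_prop
    · intro y hy
      rw [interior_Icc] at hy
      exact (hderiv y hy).differentiableAt.differentiableWithinAt
    · intro y hy
      rw [interior_Icc] at hy
      rw [(hderiv y hy).deriv]
      have h0 : 0 < y := hy.1
      have h1 : y < 1 := hy.2
      have h2 : (0:ℝ) < 2 - y := by linarith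
      rw [div_sub_div _ _ (ne_of_gt h2) (by norm_num : (2:ℝ) ≠ 0), div_nonpos_iff]
      right
      constructor
      · nlinarith [sq_nonneg (y - 1)]
      · positivity
  have h1mem : (1 : ℝ) ∈ Set.Icc (0:ℝ) 1 := by norm_num
  have hxmem : x ∈ Set.Icc (0:ℝ) 1 := ⟨hx0, hx1⟩
  have := hanti hxmem h1mem hx1
  have hf1 : f 1 = 0 := by norm_num [hf]
  have : 0 ≤ f x := by rw [← hf1]; exact this
  simp only [hf] at this
  linarith

theorem t_nonneg (m : ℕ) (hm : 0 < m) (k : ℝ) (hk0 : 0 ≤ k) (hkm : k ≤ m) :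
    Real.log (2 - k / m) -
      (2 * (m : ℝ) ^ 2 - m - 2 * k ^ 2) / (2 * m * (2 * m - 1)) ≥ 0 := by
  have hm1 : (1 : ℝ) ≤ m := by exact_mod_cast hm
  have hM : (0 : ℝ) < m := by linarith
  have hx0 : 0 ≤ k / m := div_nonneg hk0 hM.le
  have hx1 : k / m ≤ 1 := (div_le_one hM).mpr hkm
  have h1 := key_log_ineq (k / m) hx0 hx1
  have h2 : (2 * (m : ℝ) ^ 2 - m - 2 * k ^ 2) / (2 * m * (2 * m - 1))
      ≤ (1 - (k / m) ^ 2) / 2 := by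
    have hd : (1 - (k / m) ^ 2) / 2 - (2 * (m : ℝ) ^ 2 - m - 2 * k ^ 2) / (2 * m * (2 * m - 1))
        = k ^ 2 / (2 * m ^ 2 * (2 * m - 1)) := by
      have hm0 : (m : ℝ) ≠ 0 := ne_of_gt hM
      have hne : 2 * (m : ℝ) - 1 ≠ 0 := by nlinarith
      rw [div_sub_div _ _ (by norm_num) (by simp [hm0, hne]), div_eq_div_iff (by simp [hm0, hne]) (by simp [hm0, hne])]
      field_simp
      ring
    have hnn : 0 ≤ k ^ 2 / (2 * (m:ℝ) ^ 2 * (2 * m - 1)) := by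
      apply div_nonneg (sq_nonneg k)
      nlinarith
    linarith
  linarith
end

section
/- For every real x > 0, log(1 + 1/x) - 1/(1+x) ≥ (x-1)/(2x^2(x+1)); in particular log(1 + 1/x) - 1/(1+x) > 0 for x ≥ 1. -/
open Real

lemma key_log_lb (t : ℝ) (ht : 0 ≤ t) : t - t ^ 2 / 2 ≤ Real.log (1 + t) := by
  have hmono : MonotoneOn (fun u : ℝ => Real.log (1 + u) - u + u ^ 2 / 2) (Set.Ici 0) := by
    apply monotoneOn_of_hasDerivWithinAt_nonneg (convex_Ici 0)
      (f' := fun u => (1 + u)⁻¹ - 1 + u)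
    · apply ContinuousOn.add
      · apply ContinuousOn.sub
        · apply ContinuousOn.log (by fun_prop)
          intro s hs
          simp at hs; positivity
        · fun_prop
      · fun_prop
    · intro s hs
      rw [interior_Ici] at hs
      simp only [Set.mem_Ioi] at hs
      have h1 : HasDerivAt (fun u : ℝ => Real.log (1 + u)) ((1 + s)⁻¹) s := by
        have := (Real.hasDerivAt_log (by positivity : (1 + s) ≠ 0)).comp s
          ((hasDerivAt_id s).const_add 1)
        simpa [Function.comp_def] using this
      have h2 : HasDerivAt (fun u : ℝ => Real.log (1 + u) - u + u ^ 2 / 2)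
          ((1 + s)⁻¹ - 1 + s) s := by
        have := (h1.sub (hasDerivAt_id s)).add
          (((hasDerivAt_pow 2 s).div_const 2))
        simpa [Pi.add_def, Pi.sub_def] using this.congr_deriv (by ring)
      exact h2.hasDerivWithinAt
    · intro s hs
      rw [interior_Ici] at hs
      simp only [Set.mem_Ioi] at hs
      have h1 : (0:ℝ) < 1 + s := by linarith
      have : (1 + s)⁻¹ - 1 + s = s ^ 2 / (1 + s) := by
        field_simp; ring
      rw [this]; positivity
  have := hmono (Set.self_mem_Ici) (Set.mem_Ici.mpr ht) ht
  simp at this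
  linarith

theorem log_one_add_inv_bound (x : ℝ) (hx : 0 < x) :
    Real.log (1 + 1 / x) - 1 / (1 + x) ≥ (x - 1) / (2 * x ^ 2 * (x + 1)) ∧
    (1 ≤ x → Real.log (1 + 1 / x) - 1 / (1 + x) > 0) := by
  have hx1 : (0:ℝ) < 1 + x := by linarith
  have hxt : (0:ℝ) < 1 / x := by positivity
  constructor
  · have h := key_log_lb (1 / x) (le_of_lt hxt)
    have heq : 1 / x - (1 / x) ^ 2 / 2 = (x - 1) / (2 * x ^ 2 * (x + 1)) + 1 / (1 + x) := by
      field_simp; ring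
    linarith [heq ▸ h]
  · intro _
    have h1 : Real.log (1 / (1 + 1 / x)) < 1 / (1 + 1 / x) - 1 := by
      apply Real.log_lt_sub_one_of_pos (by positivity)
      apply ne_of_lt
      rw [div_lt_one (by positivity)]
      linarith
    have h2 : Real.log (1 / (1 + 1 / x)) = - Real.log (1 + 1 / x) := by
      rw [one_div, Real.log_inv]
    have h3 : 1 / (1 + 1 / x) - 1 = - (1 / (1 + x)) := by
      field_simp
      ring
    rw [h2, h3] at h1
    linarith
end

section
/- Let s and n be positive integers and let r_{s,n}(N) denote the number of integer tuples (a_1,...,a_s) with |a_i| ≤ n for all i and a_1^2 + ... + a_s^2 = N. Then Σ_{N=0}^{s n^2} r_{s,n}(N)·exp(-N/n) ≥ (π n)^{s/2} · exp(-23s/(36n)). -/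
set_option maxHeartbeats 1000000

open Real

/-- `numRep s n N` is the number of tuples `(a_1, ..., a_s)` of integers with
`|a_i| ≤ n` and `a_1^2 + ... + a_s^2 = N`. -/
noncomputable def numRep (s n : ℕ) (N : ℕ) : ℕ :=
  ((Fintype.piFinset (fun _ : Fin s => Finset.Icc (-(n : ℤ)) n)).filter
    (fun a => ∑ i, (a i) ^ 2 = (N : ℤ))).card

section Aux
open Finset


-- summability of the gaussian over ℕ (shifted-friendly): exp(-c k²) ≤ exp(-c)^k
lemma summable_nat_gauss {c : ℝ} (hc : 0 < c) :
    Summable fun k : ℕ => Real.exp (-c * (k : ℝ) ^ 2) := by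
  refine Summable.of_nonneg_of_le (fun k => (Real.exp_pos _).le) (fun k => ?_)
    (summable_geometric_of_lt_one (Real.exp_pos _).le
      (Real.exp_lt_one_iff.mpr (by linarith)) : Summable fun k : ℕ => Real.exp (-c) ^ k)
  rw [← Real.exp_nat_mul, Real.exp_le_exp]
  have h1 : (k : ℝ) ≤ (k : ℝ) ^ 2 := by
    have : (k : ℕ) ≤ k ^ 2 := Nat.le_self_pow two_ne_zero k
    exact_mod_cast this
  nlinarith

lemma summable_int_gauss {c : ℝ} (hc : 0 < c) :
    Summable fun a : ℤ => Real.exp (-c * (a : ℝ) ^ 2) := by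
  apply Summable.of_nat_of_neg
  · exact_mod_cast summable_nat_gauss hc
  · have := summable_nat_gauss hc
    refine this.congr fun k => ?_
    push_cast
    ring_nf

lemma poisson_lower (n : ℕ) (hn : 0 < n) :
    (π * n) ^ ((1:ℝ) / 2) ≤ ∑' a : ℤ, Real.exp (-(a : ℝ) ^ 2 / n) := by
  have hn' : (0:ℝ) < n := by exact_mod_cast hn
  have hπn : (0:ℝ) < π * n := by positivity
  have ha : (0:ℝ) < 1 / (π * n) := by positivity
  have hP := Real.tsum_exp_neg_mul_int_sq ha
  have h1 : ∀ a : ℤ, -π * (1 / (π * n)) * (a:ℝ) ^ 2 = -(a:ℝ)^2 / n := by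
    intro a; field_simp
  simp_rw [h1] at hP
  rw [hP]
  have h2 : (1:ℝ) / (1 / (π * n)) ^ ((1:ℝ)/2) = (π * n) ^ ((1:ℝ)/2) := by
    rw [one_div (π * n), Real.inv_rpow hπn.le, one_div, inv_inv]
  rw [h2]
  have h3 : ∀ a : ℤ, -π / (1 / (π * n)) * (a:ℝ) ^ 2 = -(π^2*n) * (a:ℝ)^2 := by
    intro a; field_simp
  simp_rw [h3]
  have hsum : Summable fun a : ℤ => Real.exp (-(π^2*(n:ℝ)) * (a : ℝ) ^ 2) :=
    summable_int_gauss (by positivity)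
  have h4 : (1:ℝ) ≤ ∑' a : ℤ, Real.exp (-(π^2*(n:ℝ)) * (a : ℝ) ^ 2) := by
    have := Summable.le_tsum hsum 0 (fun b _ => (Real.exp_pos _).le)
    simpa using this
  nlinarith [Real.rpow_pos_of_pos hπn ((1:ℝ)/2)]

-- tail bound: ∑'_{k:ℕ} exp(-(k+m)²/n) ≤ exp(-m) * (1 - exp(-1))⁻¹  for m ≥ n ≥ 1
lemma tail_bound (n m : ℕ) (hn : 0 < n) (hm : n ≤ m) :
    ∑' k : ℕ, Real.exp (-((k : ℝ) + m) ^ 2 / n) ≤ Real.exp (-(m:ℝ)) * (1 - Real.exp (-1))⁻¹ := by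
  have hn' : (0:ℝ) < n := by exact_mod_cast hn
  have hb : ∀ k : ℕ, Real.exp (-((k : ℝ) + m) ^ 2 / n) ≤ Real.exp (-(m:ℝ)) * Real.exp (-1) ^ k := by
    intro k
    rw [← Real.exp_nat_mul, ← Real.exp_add, Real.exp_le_exp]
    rw [div_le_iff₀ hn']
    have hm' : (n:ℝ) ≤ m := by exact_mod_cast hm
    have hk : (0:ℝ) ≤ k := Nat.cast_nonneg k
    nlinarith [sq_nonneg ((k:ℝ) + m)]
  have hsum1 : Summable fun k : ℕ => Real.exp (-((k : ℝ) + m) ^ 2 / n) := by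
    have := summable_nat_gauss (c := 1/(n:ℝ)) (by positivity)
    have h2 := (summable_nat_add_iff m).mpr this
    refine h2.congr fun k => ?_
    push_cast
    ring_nf
  have hsum2 : Summable fun k : ℕ => Real.exp (-(m:ℝ)) * Real.exp (-1) ^ k :=
    (summable_geometric_of_lt_one (Real.exp_pos _).le
      (Real.exp_lt_one_iff.mpr (by norm_num))).mul_left _
  calc ∑' k : ℕ, Real.exp (-((k : ℝ) + m) ^ 2 / n)
      ≤ ∑' k : ℕ, Real.exp (-(m:ℝ)) * Real.exp (-1) ^ k := Summable.tsum_le_tsum hb hsum1 hsum2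
    _ = Real.exp (-(m:ℝ)) * (1 - Real.exp (-1))⁻¹ := by
        rw [tsum_mul_left, tsum_geometric_of_lt_one (Real.exp_pos _).le
          (Real.exp_lt_one_iff.mpr (by norm_num))]

lemma one_dim (n : ℕ) (hn : 0 < n) :
    (π * n) ^ ((1:ℝ) / 2) * Real.exp (-23 / (36 * n)) ≤
      ∑ a ∈ Finset.Icc (-(n:ℤ)) n, Real.exp (-(a:ℝ) ^ 2 / n) := by
  have hn' : (0:ℝ) < n := by exact_mod_cast hn
  have hn1 : (1:ℝ) ≤ n := by exact_mod_cast hn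
  set f : ℤ → ℝ := fun a => Real.exp (-(a:ℝ) ^ 2 / n) with hf
  -- summability over ℕ parts
  have hsN : Summable fun k : ℕ => f k := by
    have := summable_nat_gauss (c := 1/(n:ℝ)) (by positivity)
    refine this.congr fun k => ?_
    simp [hf]; ring_nf
  have hsNeg : Summable fun k : ℕ => f (-(k + 1)) := by
    have := summable_nat_gauss (c := 1/(n:ℝ)) (by positivity)
    have h2 := (summable_nat_add_iff 1).mpr this
    refine h2.congr fun k => ?_
    simp only [hf]
    push_cast
    ring_nf
  -- decomposition of the full sum
  have hdecomp : ∑' a : ℤ, f a = (∑' k : ℕ, f k) + ∑' k : ℕ, f (-(k + 1)) :=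
    tsum_of_nat_of_neg_add_one hsN hsNeg
  have hsplit1 : ∑' k : ℕ, f k
      = ∑ k ∈ Finset.range (n+1), f k + ∑' k : ℕ, f ((k : ℕ) + (n+1)) :=
    (hsN.sum_add_tsum_nat_add (n+1)).symm
  have hsplit2 : ∑' k : ℕ, f (-(k + 1))
      = ∑ k ∈ Finset.range n, f (-(k + 1)) + ∑' k : ℕ, f (-(((k : ℕ) + n) + 1)) :=
    (hsNeg.sum_add_tsum_nat_add n).symm
  -- tail bounds
  have htail1 : ∑' k : ℕ, f ((k : ℕ) + (n+1))
      ≤ Real.exp (-((n:ℝ)+1)) * (1 - Real.exp (-1))⁻¹ := by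
    have := tail_bound n (n+1) hn (Nat.le_succ n)
    refine le_trans (le_of_eq (tsum_congr fun k => ?_)) (by exact_mod_cast this)
    simp only [hf]; push_cast; ring_nf
  have htail2 : ∑' k : ℕ, f (-(((k : ℕ) + n) + 1))
      ≤ Real.exp (-((n:ℝ)+1)) * (1 - Real.exp (-1))⁻¹ := by
    have := tail_bound n (n+1) hn (Nat.le_succ n)
    refine le_trans (le_of_eq (tsum_congr fun k => ?_)) (by exact_mod_cast this)
    simp only [hf]; push_cast; ring_nf
  -- finite part is at most the Icc sum
  have hfin : ∑ k ∈ Finset.range (n+1), f k + ∑ k ∈ Finset.range n, f (-(k + 1))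
      ≤ ∑ a ∈ Finset.Icc (-(n:ℤ)) n, f a := by
    classical
    set A : Finset ℤ := (Finset.range (n+1)).image (fun k : ℕ => (k : ℤ)) with hA
    set B : Finset ℤ := (Finset.range n).image (fun k : ℕ => -((k : ℤ) + 1)) with hB
    have hAeq : ∑ k ∈ Finset.range (n+1), f k = ∑ a ∈ A, f a :=
      (Finset.sum_image (by intro x _ y _ h; exact_mod_cast h)).symm
    have hBeq : ∑ k ∈ Finset.range n, f (-(k + 1)) = ∑ a ∈ B, f a := by
      rw [hB, Finset.sum_image (by intro x _ y _ h; simp only at h; omega)]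
    have hdisj : Disjoint A B := by
      rw [Finset.disjoint_left]
      intro a ha hb
      simp only [hA, hB, Finset.mem_image, Finset.mem_range] at ha hb
      obtain ⟨x, _, hx⟩ := ha
      obtain ⟨y, _, hy⟩ := hb
      omega
    have hsub : A ∪ B ⊆ Finset.Icc (-(n:ℤ)) n := by
      intro a ha
      simp only [Finset.mem_union, hA, hB, Finset.mem_image, Finset.mem_range] at ha
      rw [Finset.mem_Icc]
      rcases ha with ⟨x, hx, rfl⟩ | ⟨x, hx, rfl⟩ <;> omega
    rw [hAeq, hBeq, ← Finset.sum_union hdisj]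
    exact Finset.sum_le_sum_of_subset_of_nonneg hsub
      (fun a _ _ => (Real.exp_pos _).le)
  -- Poisson lower bound on the full sum
  have hpois : (π * n) ^ ((1:ℝ)/2) ≤ ∑' a : ℤ, f a := poisson_lower n hn
  set P : ℝ := (π * n) ^ ((1:ℝ)/2) with hP
  set E : ℝ := Real.exp (-((n:ℝ)+1)) * (1 - Real.exp (-1))⁻¹ with hE
  have hT : P - 2 * E ≤ ∑ a ∈ Finset.Icc (-(n:ℤ)) n, f a := by
    have := hdecomp
    rw [hsplit1, hsplit2] at this
    linarith [htail1, htail2, hfin, hpois]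
  -- numeric estimates
  have hPpos : (0:ℝ) < P := Real.rpow_pos_of_pos (by positivity) _
  have hsqrt : (1.7:ℝ) ≤ P := by
    rw [hP, ← Real.sqrt_eq_rpow]
    rw [show (1.7:ℝ) = Real.sqrt (1.7^2) by rw [Real.sqrt_sq (by norm_num)]]
    apply Real.sqrt_le_sqrt
    nlinarith [Real.pi_gt_three]
  have hexp1 : (2.7:ℝ) ≤ Real.exp 1 := by
    have := Real.exp_one_gt_d9; linarith
  have hexpn : Real.exp 1 * n ≤ Real.exp n := by
    have h1 : (n:ℝ) ≤ Real.exp ((n:ℝ) - 1) := by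
      have := Real.add_one_le_exp ((n:ℝ) - 1); linarith
    calc Real.exp 1 * n ≤ Real.exp 1 * Real.exp ((n:ℝ) - 1) :=
          mul_le_mul_of_nonneg_left h1 (Real.exp_pos 1).le
      _ = Real.exp n := by rw [← Real.exp_add]; ring_nf
  have hXpos : (0:ℝ) < Real.exp n * (Real.exp 1 - 1) := by
    have := Real.exp_pos (n:ℝ); nlinarith
  have hEbound : 2 * E ≤ P * (23 / (59 * n)) := by
    have hEeq : E = (Real.exp (n:ℝ) * (Real.exp 1 - 1))⁻¹ := by
      rw [hE, Real.exp_neg, Real.exp_add, Real.exp_neg]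
      have h0 : Real.exp (n:ℝ) ≠ 0 := (Real.exp_pos _).ne'
      have h1 : Real.exp 1 - 1 ≠ 0 := by nlinarith
      have h2 : Real.exp 1 ≠ 0 := (Real.exp_pos _).ne'
      field_simp
    rw [hEeq, show P * (23 / (59 * (n:ℝ))) = (23 * P) / (59 * n) by ring,
      show (2:ℝ) * (Real.exp (n:ℝ) * (Real.exp 1 - 1))⁻¹
        = 2 / (Real.exp (n:ℝ) * (Real.exp 1 - 1)) by ring,
      div_le_div_iff₀ hXpos (by positivity)]
    have key : 1.7 * (2.7 * n) * 1.7 ≤ P * Real.exp n * (Real.exp 1 - 1) := by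
      have h1 : 2.7 * (n:ℝ) ≤ Real.exp n := by nlinarith
      have h2 : (1.7:ℝ) ≤ Real.exp 1 - 1 := by linarith
      have h3 : 1.7 * (2.7 * (n:ℝ)) ≤ P * Real.exp n :=
        mul_le_mul hsqrt h1 (by positivity) hPpos.le
      have h4 : (0:ℝ) ≤ 1.7 * (2.7 * (n:ℝ)) := by positivity
      calc 1.7 * (2.7 * (n:ℝ)) * 1.7 ≤ (P * Real.exp n) * (Real.exp 1 - 1) :=
            mul_le_mul h3 h2 (by norm_num) (by positivity)
        _ = P * Real.exp n * (Real.exp 1 - 1) := by ring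
    nlinarith
  have hxbound : Real.exp (-23 / (36 * (n:ℝ))) ≤ 1 - 23 / (59 * n) := by
    set v : ℝ := 23 / (36 * (n:ℝ)) with hv
    have hvpos : 0 < v := by positivity
    have h1pv : (0:ℝ) < 1 + v := by linarith
    have h2 : 1 + v ≤ Real.exp v := by
      have := Real.add_one_le_exp v; linarith
    have hq : (1 + v)⁻¹ ≤ 1 - 23 / (59 * (n:ℝ)) := by
      rw [inv_eq_one_div, div_le_iff₀ h1pv, hv]
      have e1 : (1 - 23/(59*(n:ℝ)))*(1+23/(36*(n:ℝ)))
          = 1 + 529*((n:ℝ)-1)/(2124*(n:ℝ)^2) := by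
        field_simp
        ring
      have e2 : (0:ℝ) ≤ 529*((n:ℝ)-1)/(2124*(n:ℝ)^2) :=
        div_nonneg (by nlinarith) (by positivity)
      nlinarith
    calc Real.exp (-23 / (36 * (n:ℝ))) = (Real.exp v)⁻¹ := by
          rw [← Real.exp_neg, hv]; ring_nf
      _ ≤ (1 + v)⁻¹ := by
          apply inv_anti₀ h1pv h2
      _ ≤ _ := hq
  calc P * Real.exp (-23 / (36 * n)) ≤ P * (1 - 23 / (59 * n)) :=
        mul_le_mul_of_nonneg_left hxbound hPpos.le
    _ = P - P * (23 / (59 * n)) := by ring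
    _ ≤ P - 2 * E := by linarith
    _ ≤ _ := hT

lemma numRep_factorization (s n : ℕ) :
    ∑ N ∈ Finset.range (s * n ^ 2 + 1), (numRep s n N : ℝ) * Real.exp (-(N : ℝ) / n)
      = (∑ a ∈ Finset.Icc (-(n:ℤ)) n, Real.exp (-(a:ℝ) ^ 2 / n)) ^ s := by
  classical
  set P := Fintype.piFinset (fun _ : Fin s => Finset.Icc (-(n : ℤ)) n) with hPdef
  set g : (Fin s → ℤ) → ℕ := fun a => (∑ i, (a i) ^ 2).toNat with hg
  have hnonneg : ∀ a : Fin s → ℤ, (0:ℤ) ≤ ∑ i, (a i) ^ 2 := fun a =>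
    Finset.sum_nonneg fun i _ => sq_nonneg _
  have hmaps : ∀ a ∈ P, g a ∈ Finset.range (s * n ^ 2 + 1) := by
    intro a ha
    rw [Finset.mem_range, Nat.lt_succ_iff]
    have h1 : ∑ i, (a i) ^ 2 ≤ (s : ℤ) * n ^ 2 := by
      calc ∑ i, (a i) ^ 2 ≤ ∑ _i : Fin s, (n:ℤ) ^ 2 := by
            apply Finset.sum_le_sum
            intro i _
            have := (Fintype.mem_piFinset.mp ha) i
            rw [Finset.mem_Icc] at this
            nlinarith [this.1, this.2]
        _ = (s : ℤ) * n ^ 2 := by simp [mul_comm]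
    have h1' : ∑ i, (a i) ^ 2 ≤ ((s * n ^ 2 : ℕ) : ℤ) := by push_cast; exact h1
    simp only [hg]
    omega
  have hfiber := Finset.sum_fiberwise_of_maps_to hmaps
    (fun a => Real.exp (-(g a : ℝ) / n))
  have step1 : ∑ N ∈ Finset.range (s * n ^ 2 + 1), (numRep s n N : ℝ) * Real.exp (-(N : ℝ) / n)
      = ∑ a ∈ P, Real.exp (-(g a : ℝ) / n) := by
    rw [← hfiber]
    apply Finset.sum_congr rfl
    intro N _
    have hfilt : P.filter (fun a => g a = N) = P.filter (fun a => ∑ i, (a i) ^ 2 = (N : ℤ)) := by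
      apply Finset.filter_congr
      intro a _
      have := hnonneg a
      constructor <;> intro h <;> simp only [hg] at * <;> omega
    rw [numRep, ← hPdef, ← hfilt, Finset.sum_congr rfl (fun a ha => ?_), Finset.sum_const,
      nsmul_eq_mul]
    have : g a = N := (Finset.mem_filter.mp ha).2
    rw [this]
  rw [step1]
  have step2 : ∀ a ∈ P, Real.exp (-(g a : ℝ) / n) = ∏ i, Real.exp (-((a i : ℝ)) ^ 2 / n) := by
    intro a _
    rw [← Real.exp_sum]
    congr 1
    have h0 : ((∑ i, (a i) ^ 2).toNat : ℤ) = ∑ i, (a i) ^ 2 := Int.toNat_of_nonneg (hnonneg a)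
    have hcast : ((g a : ℕ) : ℝ) = ∑ i, ((a i : ℝ)) ^ 2 := by
      calc ((g a : ℕ) : ℝ) = ((∑ i, (a i) ^ 2 : ℤ) : ℝ) := by
            simp only [hg]; exact_mod_cast congrArg (Int.cast : ℤ → ℝ) h0
        _ = ∑ i, ((a i : ℝ)) ^ 2 := by push_cast; rfl
    rw [hcast, neg_div, ← Finset.sum_div, Finset.sum_neg_distrib, neg_div]
  rw [Finset.sum_congr rfl step2]
  rw [show P = Fintype.piFinset (fun _ : Fin s => Finset.Icc (-(n : ℤ)) n) from hPdef]
  rw [← Finset.prod_univ_sum (fun _ : Fin s => Finset.Icc (-(n : ℤ)) n)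
    (fun _ x => Real.exp (-(x:ℝ) ^ 2 / n)), Finset.prod_const, Finset.card_univ, Fintype.card_fin]

theorem sum_squares_integral_bound (s n : ℕ) (hs : 0 < s) (hn : 0 < n) :
    ∑ N ∈ Finset.range (s * n ^ 2 + 1), (numRep s n N : ℝ) * Real.exp (-(N : ℝ) / n) ≥
      (π * n) ^ ((s : ℝ) / 2) * Real.exp (-(23 * s) / (36 * n)) := by
  rw [ge_iff_le, numRep_factorization s n]
  have h1 := one_dim n hn
  have hbase : (0:ℝ) ≤ (π * n) ^ ((1:ℝ)/2) * Real.exp (-23 / (36 * (n:ℝ))) := by positivity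
  have h2 : ((π * n) ^ ((1:ℝ)/2) * Real.exp (-23 / (36 * (n:ℝ)))) ^ s
      ≤ (∑ a ∈ Finset.Icc (-(n:ℤ)) n, Real.exp (-(a:ℝ) ^ 2 / n)) ^ s :=
    pow_le_pow_left₀ hbase h1 s
  refine le_trans (le_of_eq ?_) h2
  have e1 : ((π * (n:ℝ)) ^ ((1:ℝ)/2)) ^ s = (π * n) ^ ((s:ℝ)/2) := by
    rw [← Real.rpow_natCast ((π * (n:ℝ)) ^ ((1:ℝ)/2)) s, ← Real.rpow_mul (by positivity)]
    congr 1
    ring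
  have e2 : Real.exp (-23 / (36 * (n:ℝ))) ^ s = Real.exp (-(23 * s) / (36 * n)) := by
    rw [← Real.exp_nat_mul]
    congr 1
    ring
  rw [mul_pow, e1, e2]

end Aux
end
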